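/- arXiv:0806.2979 — 2 statements merged into one kernel-verified Lean document; each statement's English description precedes it below -/
import Mathlib

section
/- Let f(z) = z(e^{4π|z|²} - 1) for z ∈ ℂ. For every ε > 0 there is a constant C_ε > 0 such that for all z₁, z₂ ∈ ℂ: |f(z₁) - f(z₂)| ≤ C_ε |z₁ - z₂| · ((e^{4π(1+ε)|z₁|²} - 1) + (e^{4π(1+ε)|z₂|²} - 1)). -/
noncomputable def f (z : ℂ) : ℂ := z * ((Real.exp (4 * Real.pi * ‖z‖ ^ 2) - 1 : ℝ) : ℂ)

lemma key_ineq (ε t : ℝ) (hε : 0 < ε) (ht : 0 ≤ t) :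
    (Real.exp t - 1) + 2 * t * Real.exp t ≤ (1 + 2/ε) * (Real.exp ((1+ε)*t) - 1) := by
  have h1 : Real.exp t ≤ Real.exp ((1+ε)*t) := Real.exp_le_exp.2 (by nlinarith)
  have h2 : ε * t + 1 ≤ Real.exp (ε * t) := by
    have := Real.add_one_le_exp (ε * t); linarith
  have h3 : Real.exp ((1+ε)*t) = Real.exp t * Real.exp (ε*t) := by
    rw [← Real.exp_add]; ring_nf
  have h4 : (1:ℝ) ≤ Real.exp t := Real.one_le_exp ht
  have h5 : Real.exp t * (ε * t) ≤ Real.exp ((1+ε)*t) - 1 := by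
    nlinarith [Real.exp_pos t]
  have h6 : 2 * t * Real.exp t ≤ (2/ε) * (Real.exp ((1+ε)*t) - 1) := by
    rw [div_mul_eq_mul_div, le_div_iff₀ hε]
    nlinarith
  linarith

lemma exp_diff (x y : ℝ) (h : y ≤ x) :
    Real.exp x - Real.exp y ≤ Real.exp x * (x - y) := by
  have h1 : Real.exp y = Real.exp x * Real.exp (y - x) := by
    rw [← Real.exp_add]; ring_nf
  nlinarith [Real.exp_pos x, Real.add_one_le_exp (y - x)]

lemma main_half (ε : ℝ) (hε : 0 < ε) (z₁ z₂ : ℂ) (hle : ‖z₂‖ ≤ ‖z₁‖) :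
    ‖f z₁ - f z₂‖ ≤ (1 + 2/ε) * ‖z₁ - z₂‖ *
      ((Real.exp (4 * Real.pi * (1 + ε) * ‖z₁‖ ^ 2) - 1) +
       (Real.exp (4 * Real.pi * (1 + ε) * ‖z₂‖ ^ 2) - 1)) := by
  have hπ : 0 < Real.pi := Real.pi_pos
  have hr₁ : 0 ≤ ‖z₁‖ := norm_nonneg _
  have hr₂ : 0 ≤ ‖z₂‖ := norm_nonneg _
  have hd : 0 ≤ ‖z₁ - z₂‖ := norm_nonneg _
  have ht₁ : 0 ≤ 4 * Real.pi * ‖z₁‖ ^ 2 := by positivity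
  have ht₂ : 0 ≤ 4 * Real.pi * ‖z₂‖ ^ 2 := by positivity
  set E₁ := Real.exp (4 * Real.pi * ‖z₁‖ ^ 2) with hE₁
  set E₂ := Real.exp (4 * Real.pi * ‖z₂‖ ^ 2) with hE₂
  have hE₁1 : (1:ℝ) ≤ E₁ := Real.one_le_exp ht₁
  have hE₂1 : (1:ℝ) ≤ E₂ := Real.one_le_exp ht₂
  have hsq : ‖z₂‖ ^ 2 ≤ ‖z₁‖ ^ 2 := by nlinarith
  have hEle : E₂ ≤ E₁ := Real.exp_le_exp.2 (by nlinarith)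
  have hsplit : f z₁ - f z₂ = (z₁ - z₂) * ((E₁ - 1 : ℝ) : ℂ)
      + z₂ * (((E₁ - E₂ : ℝ)) : ℂ) := by
    simp only [f, ← hE₁, ← hE₂]; push_cast; ring
  have hnorm : ‖f z₁ - f z₂‖ ≤ ‖z₁ - z₂‖ * (E₁ - 1) + ‖z₂‖ * (E₁ - E₂) := by
    rw [hsplit]
    calc ‖(z₁ - z₂) * ((E₁ - 1 : ℝ) : ℂ) + z₂ * (((E₁ - E₂ : ℝ)) : ℂ)‖
        ≤ ‖(z₁ - z₂) * ((E₁ - 1 : ℝ) : ℂ)‖ + ‖z₂ * (((E₁ - E₂ : ℝ)) : ℂ)‖ :=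
          norm_add_le _ _
      _ = ‖z₁ - z₂‖ * |E₁ - 1| + ‖z₂‖ * |E₁ - E₂| := by
          rw [norm_mul, norm_mul, Complex.norm_real, Complex.norm_real,
            Real.norm_eq_abs, Real.norm_eq_abs]
      _ = ‖z₁ - z₂‖ * (E₁ - 1) + ‖z₂‖ * (E₁ - E₂) := by
          rw [abs_of_nonneg (by linarith), abs_of_nonneg (by linarith)]
  -- bound E₁ - E₂
  have hdiff : E₁ - E₂ ≤ E₁ * (4 * Real.pi * ‖z₁‖ ^ 2 - 4 * Real.pi * ‖z₂‖ ^ 2) :=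
    exp_diff _ _ (by nlinarith)
  have hq : ‖z₂‖ * (‖z₁‖ + ‖z₂‖) ≤ 2 * ‖z₁‖ ^ 2 := by nlinarith
  have hrr : ‖z₁‖ - ‖z₂‖ ≤ ‖z₁ - z₂‖ := norm_sub_norm_le _ _
  have hE₁pos : 0 < E₁ := Real.exp_pos _
  have hsecond : ‖z₂‖ * (E₁ - E₂) ≤ ‖z₁ - z₂‖ * (2 * (4 * Real.pi * ‖z₁‖ ^ 2) * E₁) := by
    have h1 : ‖z₂‖ * (E₁ - E₂) ≤ ‖z₂‖ * (E₁ * (4 * Real.pi * (‖z₁‖ + ‖z₂‖) * (‖z₁‖ - ‖z₂‖))) := by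
      apply mul_le_mul_of_nonneg_left _ hr₂
      calc E₁ - E₂ ≤ E₁ * (4 * Real.pi * ‖z₁‖ ^ 2 - 4 * Real.pi * ‖z₂‖ ^ 2) := hdiff
        _ = E₁ * (4 * Real.pi * (‖z₁‖ + ‖z₂‖) * (‖z₁‖ - ‖z₂‖)) := by ring
    have h2 : ‖z₂‖ * (E₁ * (4 * Real.pi * (‖z₁‖ + ‖z₂‖) * (‖z₁‖ - ‖z₂‖)))
        ≤ ‖z₂‖ * (E₁ * (4 * Real.pi * (‖z₁‖ + ‖z₂‖) * ‖z₁ - z₂‖)) := by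
      apply mul_le_mul_of_nonneg_left _ hr₂
      apply mul_le_mul_of_nonneg_left _ (le_of_lt hE₁pos)
      apply mul_le_mul_of_nonneg_left hrr (by positivity)
    have h3 : ‖z₂‖ * (E₁ * (4 * Real.pi * (‖z₁‖ + ‖z₂‖) * ‖z₁ - z₂‖))
        ≤ ‖z₁ - z₂‖ * (2 * (4 * Real.pi * ‖z₁‖ ^ 2) * E₁) := by
      calc ‖z₂‖ * (E₁ * (4 * Real.pi * (‖z₁‖ + ‖z₂‖) * ‖z₁ - z₂‖))
          = (4 * Real.pi * E₁ * ‖z₁ - z₂‖) * (‖z₂‖ * (‖z₁‖ + ‖z₂‖)) := by ring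
        _ ≤ (4 * Real.pi * E₁ * ‖z₁ - z₂‖) * (2 * ‖z₁‖ ^ 2) :=
            mul_le_mul_of_nonneg_left hq (by positivity)
        _ = ‖z₁ - z₂‖ * (2 * (4 * Real.pi * ‖z₁‖ ^ 2) * E₁) := by ring
    linarith
  have hkey := key_ineq ε (4 * Real.pi * ‖z₁‖ ^ 2) hε ht₁
  have hexp_eq : Real.exp ((1+ε) * (4 * Real.pi * ‖z₁‖ ^ 2))
      = Real.exp (4 * Real.pi * (1 + ε) * ‖z₁‖ ^ 2) := by ring_nf
  rw [hexp_eq] at hkey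
  have hB : 0 ≤ Real.exp (4 * Real.pi * (1 + ε) * ‖z₂‖ ^ 2) - 1 := by
    have : (1:ℝ) ≤ Real.exp (4 * Real.pi * (1 + ε) * ‖z₂‖ ^ 2) :=
      Real.one_le_exp (by positivity)
    linarith
  have hCpos : (0:ℝ) < 1 + 2/ε := by positivity
  have hmain : ‖f z₁ - f z₂‖ ≤ ‖z₁ - z₂‖ * ((E₁ - 1) + 2 * (4 * Real.pi * ‖z₁‖ ^ 2) * E₁) := by
    nlinarith
  calc ‖f z₁ - f z₂‖ ≤ ‖z₁ - z₂‖ * ((E₁ - 1) + 2 * (4 * Real.pi * ‖z₁‖ ^ 2) * E₁) := hmain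
    _ ≤ ‖z₁ - z₂‖ * ((1 + 2/ε) * (Real.exp (4 * Real.pi * (1 + ε) * ‖z₁‖ ^ 2) - 1)) :=
        mul_le_mul_of_nonneg_left hkey hd
    _ ≤ (1 + 2/ε) * ‖z₁ - z₂‖ *
        ((Real.exp (4 * Real.pi * (1 + ε) * ‖z₁‖ ^ 2) - 1) +
         (Real.exp (4 * Real.pi * (1 + ε) * ‖z₂‖ ^ 2) - 1)) := by
        nlinarith [mul_nonneg (mul_nonneg hCpos.le hd) hB]

theorem stmt5 (ε : ℝ) (hε : 0 < ε) :
    ∃ C : ℝ, 0 < C ∧ ∀ z₁ z₂ : ℂ,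
      ‖f z₁ - f z₂‖ ≤ C * ‖z₁ - z₂‖ *
        ((Real.exp (4 * Real.pi * (1 + ε) * ‖z₁‖ ^ 2) - 1) +
         (Real.exp (4 * Real.pi * (1 + ε) * ‖z₂‖ ^ 2) - 1)) := by
  refine ⟨1 + 2/ε, by positivity, fun z₁ z₂ => ?_⟩
  rcases le_total ‖z₂‖ ‖z₁‖ with h | h
  · exact main_half ε hε z₁ z₂ h
  · have := main_half ε hε z₂ z₁ h
    rw [norm_sub_rev (f z₂), norm_sub_rev z₂] at this
    linarith
end

section
/- Let f(z) = z(e^{4π|z|²} - 1), viewed as a smooth map ℝ² → ℝ², with total (Fréchet) derivative Df. For every ε > 0 there is a constant C_ε > 0 such that for all z₁, z₂ ∈ ℂ: ‖(Df)(z₁) - (Df)(z₂)‖ ≤ C_ε |z₁ - z₂| · Σ_{i=1,2} (|z_i| + e^{4π(1+ε)|z_i|²} - 1). -/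
noncomputable def fder (z : ℂ) : ℂ →L[ℝ] ℂ :=
  (Real.exp (4 * Real.pi * ‖z‖ ^ 2) - 1) • ContinuousLinearMap.id ℝ ℂ +
  ((8 * Real.pi * Real.exp (4 * Real.pi * ‖z‖ ^ 2)) • (innerSL ℝ z)).smulRight z

lemma abs_exp_sub_exp_le (x y : ℝ) :
    |Real.exp x - Real.exp y| ≤ Real.exp (max x y) * |x - y| := by
  wlog h : y ≤ x generalizing x y
  · rw [abs_sub_comm, max_comm, abs_sub_comm x y]
    exact this _ _ (le_of_not_ge h)
  have hxy : Real.exp x * Real.exp (y - x) = Real.exp y := by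
    rw [← Real.exp_add]; ring_nf
  rw [max_eq_left h, abs_of_nonneg (sub_nonneg.2 (Real.exp_le_exp.2 h)),
    abs_of_nonneg (sub_nonneg.2 h)]
  nlinarith [Real.exp_pos x, Real.add_one_le_exp (y - x)]

lemma fder_sub (z₁ z₂ : ℂ) : fder z₁ - fder z₂ =
    (Real.exp (4 * Real.pi * ‖z₁‖ ^ 2) - Real.exp (4 * Real.pi * ‖z₂‖ ^ 2)) •
      ContinuousLinearMap.id ℝ ℂ
    + (((8 * Real.pi * Real.exp (4 * Real.pi * ‖z₁‖ ^ 2)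
          - 8 * Real.pi * Real.exp (4 * Real.pi * ‖z₂‖ ^ 2)) • innerSL ℝ z₁).smulRight z₁
      + ((8 * Real.pi * Real.exp (4 * Real.pi * ‖z₂‖ ^ 2)) • innerSL ℝ (z₁ - z₂)).smulRight z₁
      + ((8 * Real.pi * Real.exp (4 * Real.pi * ‖z₂‖ ^ 2)) • innerSL ℝ z₂).smulRight (z₁ - z₂)) := by
  apply ContinuousLinearMap.ext
  intro w
  simp [fder, inner_sub_left, smul_smul, sub_smul, smul_sub, Complex.real_smul]
  push_cast
  ring

set_option maxHeartbeats 1000000 in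
lemma fder_diff_bound (z₁ z₂ : ℂ) :
    ‖fder z₁ - fder z₂‖ ≤ 640 * ‖z₁ - z₂‖ *
      ((max ‖z₁‖ ‖z₂‖) + (max ‖z₁‖ ‖z₂‖) ^ 3) *
      Real.exp (4 * Real.pi * (max ‖z₁‖ ‖z₂‖) ^ 2) := by
  rw [fder_sub]
  set r₁ := ‖z₁‖ with hr₁
  set r₂ := ‖z₂‖ with hr₂
  set M := max r₁ r₂ with hM
  set d := ‖z₁ - z₂‖ with hd
  set E₁ := Real.exp (4 * Real.pi * r₁ ^ 2) with hE₁
  set E₂ := Real.exp (4 * Real.pi * r₂ ^ 2) with hE₂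
  set S := Real.exp (4 * Real.pi * M ^ 2) with hS
  have hπ := Real.pi_pos
  have hπ' : Real.pi < 3.15 := by
    have := Real.pi_lt_d6; linarith
  have hr₁0 : 0 ≤ r₁ := norm_nonneg _
  have hr₂0 : 0 ≤ r₂ := norm_nonneg _
  have hd0 : 0 ≤ d := norm_nonneg _
  have hM0 : 0 ≤ M := le_max_of_le_left hr₁0
  have hr₁M : r₁ ≤ M := le_max_left _ _
  have hr₂M : r₂ ≤ M := le_max_right _ _
  have hr₁sq : r₁ ^ 2 ≤ M ^ 2 := pow_le_pow_left₀ hr₁0 hr₁M 2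
  have hr₂sq : r₂ ^ 2 ≤ M ^ 2 := pow_le_pow_left₀ hr₂0 hr₂M 2
  have hE₁S : E₁ ≤ S := Real.exp_le_exp.2 (by nlinarith)
  have hE₂S : E₂ ≤ S := Real.exp_le_exp.2 (by nlinarith)
  have hS0 : 0 < S := Real.exp_pos _
  have hE₂0 : 0 < E₂ := Real.exp_pos _
  have hrd : |r₁ - r₂| ≤ d := abs_norm_sub_norm_le z₁ z₂
  have hEd : |E₁ - E₂| ≤ S * (8 * Real.pi * M * d) := by
    have h1 := abs_exp_sub_exp_le (4 * Real.pi * r₁ ^ 2) (4 * Real.pi * r₂ ^ 2)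
    have h2 : Real.exp (max (4 * Real.pi * r₁ ^ 2) (4 * Real.pi * r₂ ^ 2)) ≤ S :=
      Real.exp_le_exp.2 (max_le (by nlinarith) (by nlinarith))
    have h3 : |4 * Real.pi * r₁ ^ 2 - 4 * Real.pi * r₂ ^ 2| ≤ 8 * Real.pi * M * d := by
      have he : 4 * Real.pi * r₁ ^ 2 - 4 * Real.pi * r₂ ^ 2
          = (4 * Real.pi * (r₁ + r₂)) * (r₁ - r₂) := by ring
      rw [he, abs_mul, abs_of_nonneg (by positivity : (0:ℝ) ≤ 4 * Real.pi * (r₁ + r₂))]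
      have h4 : (4 * Real.pi * (r₁ + r₂)) * |r₁ - r₂| ≤ (4 * Real.pi * (2 * M)) * d := by
        apply mul_le_mul (by nlinarith) hrd (abs_nonneg _) (by positivity)
      linarith
    calc |E₁ - E₂| ≤ Real.exp (max (4 * Real.pi * r₁ ^ 2) (4 * Real.pi * r₂ ^ 2)) *
          |4 * Real.pi * r₁ ^ 2 - 4 * Real.pi * r₂ ^ 2| := h1
      _ ≤ S * (8 * Real.pi * M * d) := mul_le_mul h2 h3 (abs_nonneg _) hS0.le
  have hinner1 : ‖innerSL ℝ z₁‖ = r₁ := innerSL_apply_norm ℝ z₁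
  have hinner2 : ‖innerSL ℝ z₂‖ = r₂ := innerSL_apply_norm ℝ z₂
  have hinner3 : ‖innerSL ℝ (z₁ - z₂)‖ = d := innerSL_apply_norm ℝ (z₁ - z₂)
  have hn1 : ‖(E₁ - E₂) • ContinuousLinearMap.id ℝ ℂ‖ ≤ |E₁ - E₂| := by
    refine le_trans (ContinuousLinearMap.opNorm_smul_le _ _) ?_
    rw [Real.norm_eq_abs]
    exact mul_le_of_le_one_right (abs_nonneg _) ContinuousLinearMap.norm_id_le
  have habs8 : ‖(8 * Real.pi * E₁ - 8 * Real.pi * E₂ : ℝ)‖ = 8 * Real.pi * |E₁ - E₂| := by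
    rw [Real.norm_eq_abs, show 8 * Real.pi * E₁ - 8 * Real.pi * E₂
      = 8 * Real.pi * (E₁ - E₂) by ring, abs_mul,
      abs_of_nonneg (by positivity : (0:ℝ) ≤ 8 * Real.pi)]
  have habs8' : ‖(8 * Real.pi * E₂ : ℝ)‖ = 8 * Real.pi * E₂ := by
    rw [Real.norm_eq_abs, abs_of_nonneg (by positivity : (0:ℝ) ≤ 8 * Real.pi * E₂)]
  have hn2 : ‖((8 * Real.pi * E₁ - 8 * Real.pi * E₂) • innerSL ℝ z₁).smulRight z₁‖
      ≤ (8 * Real.pi * |E₁ - E₂|) * r₁ * r₁ := by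
    rw [ContinuousLinearMap.norm_smulRight_apply]
    refine mul_le_mul_of_nonneg_right ?_ hr₁0
    refine le_trans (ContinuousLinearMap.opNorm_smul_le _ _) ?_
    rw [habs8, hinner1]
  have hn3 : ‖((8 * Real.pi * E₂) • innerSL ℝ (z₁ - z₂)).smulRight z₁‖
      ≤ 8 * Real.pi * E₂ * d * r₁ := by
    rw [ContinuousLinearMap.norm_smulRight_apply]
    refine mul_le_mul_of_nonneg_right ?_ hr₁0
    refine le_trans (ContinuousLinearMap.opNorm_smul_le _ _) ?_
    rw [habs8', hinner3]
  have hn4 : ‖((8 * Real.pi * E₂) • innerSL ℝ z₂).smulRight (z₁ - z₂)‖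
      ≤ 8 * Real.pi * E₂ * r₂ * d := by
    rw [ContinuousLinearMap.norm_smulRight_apply]
    refine mul_le_mul_of_nonneg_right ?_ hd0
    refine le_trans (ContinuousLinearMap.opNorm_smul_le _ _) ?_
    rw [habs8', hinner2]
  refine le_trans (norm_add_le _ _) ?_
  refine le_trans (add_le_add hn1 (le_trans (norm_add₃_le)
    (add_le_add (add_le_add hn2 hn3) hn4))) ?_
  -- now a purely real inequality
  have t2 : |E₁ - E₂| * (r₁ * r₁) ≤ (S * (8 * Real.pi * M * d)) * (M * M) := by
    apply mul_le_mul hEd (by nlinarith) (by positivity) (by positivity)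
  have t3 : E₂ * d * r₁ ≤ S * d * M := by
    apply mul_le_mul (mul_le_mul hE₂S le_rfl hd0 hS0.le) hr₁M hr₁0
      (mul_nonneg hS0.le hd0)
  have t4 : E₂ * r₂ * d ≤ S * M * d := by
    apply mul_le_mul (mul_le_mul hE₂S hr₂M hr₂0 hS0.le) le_rfl hd0
      (mul_nonneg hS0.le hM0)
  have hπ2 : Real.pi ^ 2 < 9.9225 := by nlinarith
  have hm1 : 0 ≤ S * M * d := by positivity
  have hm3 : 0 ≤ S * M ^ 3 * d := by positivity
  nlinarith [mul_nonneg (mul_nonneg hS0.le hM0) hd0]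

lemma key_scalar (ε : ℝ) (hε : 0 < ε) : ∃ C : ℝ, 0 < C ∧ ∀ m : ℝ, 0 ≤ m →
    (m + m ^ 3) * Real.exp (4 * Real.pi * m ^ 2) ≤
      C * (m + Real.exp (4 * Real.pi * (1 + ε) * m ^ 2) - 1) := by
  have hπ := Real.pi_pos
  set c := 4 * Real.pi * ε with hc
  have hc0 : 0 < c := by positivity
  obtain ⟨u, hu0, huc⟩ : ∃ u : ℝ, 0 < u ∧ u * c ^ 2 = 8 :=
    ⟨8 / c ^ 2, by positivity, by field_simp⟩
  refine ⟨2 * Real.exp (4 * Real.pi) + 4 * u, by positivity, fun m hm => ?_⟩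
  have hone : 1 ≤ Real.exp (4 * Real.pi * (1 + ε) * m ^ 2) :=
    Real.one_le_exp (by positivity)
  rcases le_or_gt m 1 with h1 | h1
  · -- small case
    have hcube : m ^ 3 ≤ m := by nlinarith
    have hmsq : m ^ 2 ≤ 1 := by nlinarith
    have hexp : Real.exp (4 * Real.pi * m ^ 2) ≤ Real.exp (4 * Real.pi) :=
      Real.exp_le_exp.2 (by nlinarith [mul_le_mul_of_nonneg_left hmsq hπ.le])
    have hL : (m + m ^ 3) * Real.exp (4 * Real.pi * m ^ 2)
        ≤ (2 * m) * Real.exp (4 * Real.pi) := by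
      apply mul_le_mul (by linarith) hexp (Real.exp_pos _).le (by linarith)
    nlinarith [mul_nonneg (by positivity : (0:ℝ) ≤ 2 * Real.exp (4 * Real.pi) + 4 * u)
      (by linarith : (0:ℝ) ≤ Real.exp (4 * Real.pi * (1 + ε) * m ^ 2) - 1),
      mul_nonneg (by positivity : (0:ℝ) ≤ 4 * u) hm]
  · -- large case
    have hm1 : 1 ≤ m := h1.le
    have hm2 : 1 ≤ m ^ 2 := by nlinarith
    have hq : c ^ 2 * m ^ 4 / 4 ≤ Real.exp (c * m ^ 2) := by
      have hsplit : Real.exp (c * m ^ 2) = Real.exp (c * m ^ 2 / 2) * Real.exp (c * m ^ 2 / 2) := by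
        rw [← Real.exp_add]; ring_nf
      nlinarith [Real.add_one_le_exp (c * m ^ 2 / 2), Real.exp_pos (c * m ^ 2 / 2),
        mul_pos hc0 (lt_of_lt_of_le one_pos hm2), sq_nonneg m]
    have h2m : 2 * m ^ 3 ≤ u * Real.exp (c * m ^ 2) := by
      have e2 : 2 * m ^ 3 ≤ 2 * m ^ 4 := by
        nlinarith [mul_nonneg (pow_nonneg hm 3) (sub_nonneg.2 hm1)]
      have e3 := mul_le_mul_of_nonneg_left hq hu0.le
      have e4 : u * (c ^ 2 * m ^ 4 / 4) = 2 * m ^ 4 := by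
        calc u * (c ^ 2 * m ^ 4 / 4) = (u * c ^ 2) * m ^ 4 / 4 := by ring
          _ = 8 * m ^ 4 / 4 := by rw [huc]
          _ = 2 * m ^ 4 := by ring
      linarith
    have hsplitb : Real.exp (4 * Real.pi * (1 + ε) * m ^ 2)
        = Real.exp (4 * Real.pi * m ^ 2) * Real.exp (c * m ^ 2) := by
      rw [← Real.exp_add, hc]; ring_nf
    have hL : (m + m ^ 3) * Real.exp (4 * Real.pi * m ^ 2)
        ≤ u * Real.exp (4 * Real.pi * (1 + ε) * m ^ 2) := by
      rw [hsplitb]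
      have s1 : (m + m ^ 3) * Real.exp (4 * Real.pi * m ^ 2)
          ≤ (2 * m ^ 3) * Real.exp (4 * Real.pi * m ^ 2) :=
        mul_le_mul_of_nonneg_right (by nlinarith) (Real.exp_pos _).le
      have s2 : (2 * m ^ 3) * Real.exp (4 * Real.pi * m ^ 2)
          ≤ (u * Real.exp (c * m ^ 2)) * Real.exp (4 * Real.pi * m ^ 2) :=
        mul_le_mul_of_nonneg_right h2m (Real.exp_pos _).le
      calc (m + m ^ 3) * Real.exp (4 * Real.pi * m ^ 2)
          ≤ (u * Real.exp (c * m ^ 2)) * Real.exp (4 * Real.pi * m ^ 2) := le_trans s1 s2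
        _ = u * (Real.exp (4 * Real.pi * m ^ 2) * Real.exp (c * m ^ 2)) := by ring
    have hA : 1 ≤ (1 + ε) * m ^ 2 := by nlinarith
    have hb1 : 1 ≤ 4 * Real.pi * (1 + ε) * m ^ 2 := by
      nlinarith [mul_le_mul_of_nonneg_left hA (by positivity : (0:ℝ) ≤ 4 * Real.pi),
        Real.pi_gt_three]
    have hE2 : 2 ≤ Real.exp (4 * Real.pi * (1 + ε) * m ^ 2) := by
      nlinarith [Real.add_one_le_exp (4 * Real.pi * (1 + ε) * m ^ 2)]
    have final1 : u * Real.exp (4 * Real.pi * (1 + ε) * m ^ 2)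
        ≤ u * (2 * (Real.exp (4 * Real.pi * (1 + ε) * m ^ 2) - 1)) :=
      mul_le_mul_of_nonneg_left (by linarith) hu0.le
    have final2 : u * (2 * (Real.exp (4 * Real.pi * (1 + ε) * m ^ 2) - 1))
        ≤ (2 * Real.exp (4 * Real.pi) + 4 * u)
          * (m + Real.exp (4 * Real.pi * (1 + ε) * m ^ 2) - 1) := by
      nlinarith [mul_nonneg (by positivity : (0:ℝ) ≤ 2 * Real.exp (4 * Real.pi) + 4 * u) hm,
        mul_nonneg (by positivity : (0:ℝ) ≤ 2 * Real.exp (4 * Real.pi))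
          (by linarith : (0:ℝ) ≤ Real.exp (4 * Real.pi * (1 + ε) * m ^ 2) - 1),
        mul_nonneg (by positivity : (0:ℝ) ≤ 2 * u)
          (by linarith : (0:ℝ) ≤ Real.exp (4 * Real.pi * (1 + ε) * m ^ 2) - 1)]
    linarith

lemma hasFDerivAt_f (z : ℂ) : HasFDerivAt f (fder z) z := by
  have h1 : HasFDerivAt (fun w : ℂ => ‖w‖ ^ 2) (2 • innerSL ℝ z) z :=
    (hasStrictFDerivAt_norm_sq z).hasFDerivAt
  have h2 := h1.const_mul (4 * Real.pi)
  have h3 := (Real.hasDerivAt_exp (4 * Real.pi * ‖z‖ ^ 2)).comp_hasFDerivAt z h2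
  have h4 := h3.sub_const 1
  have h5 := h4.smul (hasFDerivAt_id z)
  have hf : f = fun w : ℂ => (Real.exp (4 * Real.pi * ‖w‖ ^ 2) - 1) • w := by
    funext w
    simp [f, Complex.real_smul, mul_comm]
  rw [hf]
  convert h5 using 1
  · rfl
  · rfl
  · rfl
  unfold fder
  congr 1
  ext w
  simp [smul_smul]
  left; ring

theorem stmt6 (ε : ℝ) (hε : 0 < ε) :
    ∃ C : ℝ, 0 < C ∧ ∀ z₁ z₂ : ℂ,
      ‖fderiv ℝ f z₁ - fderiv ℝ f z₂‖ ≤ C * ‖z₁ - z₂‖ *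
        ((‖z₁‖ + Real.exp (4 * Real.pi * (1 + ε) * ‖z₁‖ ^ 2) - 1) +
         (‖z₂‖ + Real.exp (4 * Real.pi * (1 + ε) * ‖z₂‖ ^ 2) - 1)) := by
  obtain ⟨C₀, hC₀, hkey⟩ := key_scalar ε hε
  refine ⟨640 * C₀, by positivity, fun z₁ z₂ => ?_⟩
  rw [(hasFDerivAt_f z₁).fderiv, (hasFDerivAt_f z₂).fderiv]
  have hM0 : 0 ≤ max ‖z₁‖ ‖z₂‖ := le_max_of_le_left (norm_nonneg _)
  have h1 := fder_diff_bound z₁ z₂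
  have h2 := hkey (max ‖z₁‖ ‖z₂‖) hM0
  have hd0 : 0 ≤ ‖z₁ - z₂‖ := norm_nonneg _
  have p1 : 0 ≤ ‖z₁‖ + Real.exp (4 * Real.pi * (1 + ε) * ‖z₁‖ ^ 2) - 1 := by
    have := Real.one_le_exp (by positivity : (0:ℝ) ≤ 4 * Real.pi * (1 + ε) * ‖z₁‖ ^ 2)
    linarith [norm_nonneg z₁]
  have p2 : 0 ≤ ‖z₂‖ + Real.exp (4 * Real.pi * (1 + ε) * ‖z₂‖ ^ 2) - 1 := by
    have := Real.one_le_exp (by positivity : (0:ℝ) ≤ 4 * Real.pi * (1 + ε) * ‖z₂‖ ^ 2)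
    linarith [norm_nonneg z₂]
  have hB : max ‖z₁‖ ‖z₂‖ + Real.exp (4 * Real.pi * (1 + ε) * (max ‖z₁‖ ‖z₂‖) ^ 2) - 1 ≤
      (‖z₁‖ + Real.exp (4 * Real.pi * (1 + ε) * ‖z₁‖ ^ 2) - 1) +
      (‖z₂‖ + Real.exp (4 * Real.pi * (1 + ε) * ‖z₂‖ ^ 2) - 1) := by
    rcases max_cases ‖z₁‖ ‖z₂‖ with ⟨he, _⟩ | ⟨he, _⟩ <;> rw [he] <;> linarith
  calc ‖fder z₁ - fder z₂‖
      ≤ 640 * ‖z₁ - z₂‖ * ((max ‖z₁‖ ‖z₂‖) + (max ‖z₁‖ ‖z₂‖) ^ 3) *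
        Real.exp (4 * Real.pi * (max ‖z₁‖ ‖z₂‖) ^ 2) := h1
    _ = (640 * ‖z₁ - z₂‖) * (((max ‖z₁‖ ‖z₂‖) + (max ‖z₁‖ ‖z₂‖) ^ 3) *
        Real.exp (4 * Real.pi * (max ‖z₁‖ ‖z₂‖) ^ 2)) := by ring
    _ ≤ (640 * ‖z₁ - z₂‖) * (C₀ * (max ‖z₁‖ ‖z₂‖ +
        Real.exp (4 * Real.pi * (1 + ε) * (max ‖z₁‖ ‖z₂‖) ^ 2) - 1)) :=
        mul_le_mul_of_nonneg_left h2 (by positivity)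
    _ = (640 * C₀ * ‖z₁ - z₂‖) * (max ‖z₁‖ ‖z₂‖ +
        Real.exp (4 * Real.pi * (1 + ε) * (max ‖z₁‖ ‖z₂‖) ^ 2) - 1) := by ring
    _ ≤ (640 * C₀ * ‖z₁ - z₂‖) * ((‖z₁‖ + Real.exp (4 * Real.pi * (1 + ε) * ‖z₁‖ ^ 2) - 1) +
        (‖z₂‖ + Real.exp (4 * Real.pi * (1 + ε) * ‖z₂‖ ^ 2) - 1)) :=
        mul_le_mul_of_nonneg_left hB (by positivity)
    _ = 640 * C₀ * ‖z₁ - z₂‖ * ((‖z₁‖ + Real.exp (4 * Real.pi * (1 + ε) * ‖z₁‖ ^ 2) - 1) +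
        (‖z₂‖ + Real.exp (4 * Real.pi * (1 + ε) * ‖z₂‖ ^ 2) - 1)) := by ring
end
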